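/- Let A be a full subcategory of C_fin and let F be an object of C which is universal and locally finite for A. For any object A of A and t ≥ 2: if F → (B)^A_{k,t} for all k ≥ 2 and all B in A with hom(A,B) ≠ ∅, then t_A(A) ≤ t. (Proved by a compactness argument on the space of colorings k^{hom(A,F)}.) -/

import Mathlib

open CategoryTheory

universe v u v' u'

def RamseyArrow (C : Type u) [Category.{v} C] (A B Z : C) (k t : ℕ) : Prop :=
  ∀ χ : (A ⟶ Z) → Fin k, ∃ w : B ⟶ Z,
    (Set.range fun f : A ⟶ B => χ (f ≫ w)).ncard ≤ t

noncomputable def ramseyDeg (C : Type u) [Category.{v} C] (A : C) : ℕ∞ :=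
  sInf {n : ℕ∞ | ∃ m : ℕ, n = (m : ℕ∞) ∧ 1 ≤ m ∧
    ∀ k : ℕ, 2 ≤ k → ∀ B : C, ∃ Z : C, RamseyArrow C A B Z k m}

def SatisfiesC (C : Type u) [Category.{v} C] (Cfin : Set C) : Prop :=
  (∀ {X Y : C} (f : X ⟶ Y), Mono f) ∧
  (∀ A B : C, A ∈ Cfin → B ∈ Cfin → Finite (A ⟶ B)) ∧
  (∀ F : C, ∃ A : C, A ∈ Cfin ∧ Nonempty (A ⟶ F)) ∧
  (∀ B : C, B ∈ Cfin → {A : C | A ∈ Cfin ∧ Nonempty (A ⟶ B)}.Finite)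

def UniversalFor (C : Type u) [Category.{v} C] (F : C) (S : Set C) : Prop :=
  ∀ A ∈ S, Nonempty (A ⟶ F)

def LocallyFiniteFor (C : Type u) [Category.{v} C] (F : C) (S : Set C) : Prop :=
  ∀ (A B : C), A ∈ S → B ∈ S → ∀ (e : A ⟶ F) (f : B ⟶ F),
    ∃ D₀ : C, D₀ ∈ S ∧ ∃ (r : D₀ ⟶ F) (p : A ⟶ D₀) (q : B ⟶ D₀),
      p ≫ r = e ∧ q ≫ r = f ∧
      ∀ (H : C) (r' : H ⟶ F) (p' : A ⟶ H) (q' : B ⟶ H),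
        p' ≫ r' = e → q' ≫ r' = f →
        ∃ s : D₀ ⟶ H, s ≫ r' = r ∧ p ≫ s = p' ∧ q ≫ s = q'

theorem stmt4 {C : Type u} [Category.{v} C] (Cfin Afin : Set C)
    (hsat : SatisfiesC C Cfin) (hsub : Afin ⊆ Cfin)
    (F : C) (huniv : UniversalFor C F Afin) (hlf : LocallyFiniteFor C F Afin)
    (A : C) (hA : A ∈ Afin) (t : ℕ) (ht : 2 ≤ t)
    (harrow : ∀ k : ℕ, 2 ≤ k → ∀ B : C, B ∈ Afin → Nonempty (A ⟶ B) →
      RamseyArrow C A B F k t) :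
    ramseyDeg (ObjectProperty.FullSubcategory fun X : C => X ∈ Afin) ⟨A, hA⟩ ≤ (t : ℕ∞) := by
  classical
  refine sInf_le ?_
  refine ⟨t, rfl, by omega, ?_⟩
  intro k hk B
  by_cases hempty : Nonempty (A ⟶ B.obj)
  · by_contra hcon
    push_neg at hcon
    simp only [RamseyArrow, not_forall, not_exists, not_le] at hcon
    choose χZ hχZ using hcon
    letI : TopologicalSpace (Fin k) := ⊥
    haveI : DiscreteTopology (Fin k) := ⟨rfl⟩
    haveI : Finite (A ⟶ B.obj) := hsat.2.1 A B.obj (hsub hA) (hsub B.property)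
    have hk0 : 0 < k := by omega
    haveI : Nonempty (Fin k) := ⟨⟨0, hk0⟩⟩
    let Bad : (Σ' (D : C) (_ : D ∈ Afin), (D ⟶ F)) → Set ((A ⟶ F) → Fin k) := fun i =>
      ⋂ w : B.obj ⟶ i.1, {χ | t < (Set.range fun f : A ⟶ B.obj => χ (f ≫ (w ≫ i.2.2))).ncard}
    have hclosed : ∀ i, IsClosed (Bad i) := by
      intro i
      refine isClosed_iInter fun w => ?_
      have hcont : Continuous fun (χ : (A ⟶ F) → Fin k) (f : A ⟶ B.obj) =>
          χ (f ≫ (w ≫ i.2.2)) := continuous_pi fun f => continuous_apply _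
      exact (isClosed_discrete
        {g : (A ⟶ B.obj) → Fin k | t < (Set.range g).ncard}).preimage hcont
    have hne : (Set.univ ∩ ⋂ i, Bad i).Nonempty := by
      by_contra hemp
      rw [Set.not_nonempty_iff_eq_empty] at hemp
      obtain ⟨s, hs⟩ := isCompact_univ.elim_finite_subfamily_closed Bad hclosed hemp
      have key : ∀ sc : Finset (Σ' (D : C) (_ : D ∈ Afin), (D ⟶ F)),
          ∃ (D : C) (hD : D ∈ Afin) (r : D ⟶ F),
          ∀ i ∈ sc, ∃ u : i.1 ⟶ D, u ≫ r = i.2.2 := by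
        intro sc
        induction sc using Finset.induction_on with
        | empty =>
          obtain ⟨e⟩ := huniv A hA
          exact ⟨A, hA, e, by simp⟩
        | @insert j s' hnotmem ih =>
          obtain ⟨D, hD, r, hcov⟩ := ih
          obtain ⟨D₀, hD₀, rr, p, q, hp, hq, -⟩ := hlf D j.1 hD j.2.1 r j.2.2
          refine ⟨D₀, hD₀, rr, fun i hi => ?_⟩
          rcases Finset.mem_insert.mp hi with h | h
          · subst h; exact ⟨q, hq⟩
          · obtain ⟨u, hu⟩ := hcov i h
            exact ⟨u ≫ p, by rw [Category.assoc, hp, hu]⟩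
      obtain ⟨D, hD, r, hcov⟩ := key s
      haveI := hsat.1 r
      let χD : (A ⟶ D) → Fin k := fun g => χZ ⟨D, hD⟩ (ObjectProperty.homMk g)
      let χ : (A ⟶ F) → Fin k := fun e =>
        if h : ∃ p : A ⟶ D, p ≫ r = e then χD h.choose else ⟨0, hk0⟩
      have hmemχ : χ ∈ Set.univ ∩ ⋂ i ∈ s, Bad i := by
        refine ⟨trivial, ?_⟩
        simp only [Set.mem_iInter]
        intro i hi
        obtain ⟨u, hu⟩ := hcov i hi
        refine Set.mem_iInter.mpr fun w => ?_
        have hχval : ∀ f : A ⟶ B.obj, χ (f ≫ (w ≫ i.2.2)) = χD (f ≫ (w ≫ u)) := by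
          intro f
          have hfac : (f ≫ (w ≫ u)) ≫ r = f ≫ (w ≫ i.2.2) := by
            simp only [Category.assoc, hu]
          have hex : ∃ p : A ⟶ D, p ≫ r = f ≫ (w ≫ i.2.2) := ⟨_, hfac⟩
          have h1 : χ (f ≫ (w ≫ i.2.2)) = χD hex.choose := dif_pos hex
          have h3 : hex.choose = f ≫ (w ≫ u) :=
            (cancel_mono r).mp (hex.choose_spec.trans hfac.symm)
          rw [h1, h3]
        have hfun : (fun f : A ⟶ B.obj => χ (f ≫ (w ≫ i.2.2)))
            = fun f : A ⟶ B.obj => χD (f ≫ (w ≫ u)) := funext hχval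
        show t < (Set.range fun f : A ⟶ B.obj => χ (f ≫ (w ≫ i.2.2))).ncard
        rw [hfun]
        have hZ := hχZ ⟨D, hD⟩ (ObjectProperty.homMk (show B.obj ⟶ D from w ≫ u))
        have hR : (Set.range fun f : A ⟶ B.obj => χD (f ≫ (w ≫ u))) =
            Set.range fun f : (⟨A, hA⟩ : ObjectProperty.FullSubcategory fun X : C => X ∈ Afin) ⟶ B =>
              χZ ⟨D, hD⟩ (f ≫ ObjectProperty.homMk (show B.obj ⟶ D from w ≫ u)) := by
          ext c
          constructor
          · rintro ⟨f, rfl⟩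
            exact ⟨ObjectProperty.homMk f, rfl⟩
          · rintro ⟨f, rfl⟩
            exact ⟨f.hom, rfl⟩
        rw [hR]
        exact hZ
      rw [hs] at hmemχ
      exact hmemχ
    obtain ⟨χ, -, hχ⟩ := hne
    obtain ⟨f₀⟩ := hempty
    obtain ⟨w, hw⟩ := harrow k hk B.obj B.property ⟨f₀⟩ χ
    obtain ⟨D₀, hD₀, r, p, q, hp, hq, -⟩ := hlf B.obj B.obj B.property B.property w w
    have hbad := Set.mem_iInter.mp (Set.mem_iInter.mp hχ ⟨D₀, hD₀, r⟩) p
    have hfun : (fun f : A ⟶ B.obj => χ (f ≫ (p ≫ r)))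
        = fun f : A ⟶ B.obj => χ (f ≫ w) := funext fun f => by rw [hp]
    rw [Set.mem_setOf_eq, hfun] at hbad
    omega
  · refine ⟨B, fun χ => ⟨𝟙 B, ?_⟩⟩
    haveI : IsEmpty (A ⟶ B.obj) := not_nonempty_iff.mp hempty
    haveI : IsEmpty ((⟨A, hA⟩ : ObjectProperty.FullSubcategory fun X : C => X ∈ Afin) ⟶ B) :=
      ⟨fun g => hempty ⟨g.hom⟩⟩
    rw [Set.range_eq_empty]
    simp
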